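/- Fix real constants Σ > 0 and r with −1 < r < 1, and for parameters θ = (μ_x, σ) with σ > 0 consider the 2D correlated Gaussian model p(x, y; μ_x, σ) = (1/(2πΣ²√(1−r²))) · exp( −(1/(2(1−r²))) [ (x−μ_x)²/σ² + y²σ²/Σ⁴ + 2r(x−μ_x)y/Σ² ] ) on ℝ². Then p(·,·;μ_x,σ) is a probability density on ℝ² and its Fisher information matrix with respect to (μ_x, σ) is diagonal with entries g_{μμ} = 1/((1−r²)σ²), g_{σσ} = 4/((1−r²)σ²), and g_{μσ} = g_{σμ} = 0; that is, g_{jk} = (1/(1−r²)) diag(1/σ², 4/σ²). -/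

import Mathlib

open MeasureTheory

open Real in
/-- Integrability of `x^n * exp (-b x²)`. -/
private lemma aux_ipg {b : ℝ} (hb : 0 < b) (n : ℕ) :
    Integrable (fun x : ℝ => x ^ n * Real.exp (-b * x ^ 2)) := by
  have h : (-1 : ℝ) < (n : ℝ) := lt_of_lt_of_le neg_one_lt_zero (Nat.cast_nonneg n)
  have := integrable_rpow_mul_exp_neg_mul_sq hb h
  simp_rw [Real.rpow_natCast] at this
  exact this

private lemma aux_gm0 (b : ℝ) :
    ∫ x : ℝ, Real.exp (-b * x ^ 2) = Real.sqrt (Real.pi / b) :=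
  integral_gaussian b

private lemma aux_gm1 {b : ℝ} (hb : 0 < b) :
    ∫ x : ℝ, x * Real.exp (-b * x ^ 2) = 0 := by
  have hder : ∀ x : ℝ, HasDerivAt (fun x : ℝ => Real.exp (-b * x ^ 2))
      ((-2 * b) * (x * Real.exp (-b * x ^ 2))) x := by
    intro x
    have h := ((hasDerivAt_pow 2 x).const_mul (-b)).exp
    convert h using 1
    norm_num
    ring
  have hint : Integrable (fun x : ℝ => (-2 * b) * (x * Real.exp (-b * x ^ 2))) := by
    have := (aux_ipg hb 1).const_mul (-2 * b)
    simpa using this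
  have h0 := integral_eq_zero_of_hasDerivAt_of_integrable hder hint
      (by simpa using aux_ipg hb 0)
  rw [integral_const_mul] at h0
  have h2b : (-2 * b : ℝ) ≠ 0 := by
    have : (0:ℝ) < 2 * b := by linarith
    intro h; nlinarith
  exact (mul_eq_zero.mp h0).resolve_left h2b

private lemma aux_gmrec {b : ℝ} (hb : 0 < b) (k : ℕ) :
    2 * b * ∫ x : ℝ, x ^ (k + 2) * Real.exp (-b * x ^ 2)
      = ((k : ℝ) + 1) * ∫ x : ℝ, x ^ k * Real.exp (-b * x ^ 2) := by
  have hder : ∀ x : ℝ, HasDerivAt (fun x : ℝ => x ^ (k + 1) * Real.exp (-b * x ^ 2))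
      (((k : ℝ) + 1) * (x ^ k * Real.exp (-b * x ^ 2))
        - 2 * b * (x ^ (k + 2) * Real.exp (-b * x ^ 2))) x := by
    intro x
    have h1 : HasDerivAt (fun x : ℝ => x ^ (k + 1)) (((k : ℝ) + 1) * x ^ k) x := by
      simpa using hasDerivAt_pow (k + 1) x
    have h2 := ((hasDerivAt_pow 2 x).const_mul (-b)).exp
    have h3 : HasDerivAt (fun x : ℝ => x ^ (k + 1) * Real.exp (-b * x ^ 2)) _ x := h1.mul h2
    convert h3 using 1
    norm_num
    ring
  have hint : Integrable (fun x : ℝ => ((k : ℝ) + 1) * (x ^ k * Real.exp (-b * x ^ 2))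
      - 2 * b * (x ^ (k + 2) * Real.exp (-b * x ^ 2))) :=
    ((aux_ipg hb k).const_mul _).sub ((aux_ipg hb (k + 2)).const_mul _)
  have h0 := integral_eq_zero_of_hasDerivAt_of_integrable hder hint (aux_ipg hb (k + 1))
  rw [integral_sub ((aux_ipg hb k).const_mul _) ((aux_ipg hb (k + 2)).const_mul _),
    integral_const_mul, integral_const_mul] at h0
  linarith

private lemma aux_gm2 {b : ℝ} (hb : 0 < b) :
    ∫ x : ℝ, x ^ 2 * Real.exp (-b * x ^ 2) = Real.sqrt (Real.pi / b) / (2 * b) := by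
  have h := aux_gmrec hb 0
  simp only [Nat.cast_zero, zero_add, pow_zero, one_mul] at h
  rw [aux_gm0 b] at h
  rw [eq_div_iff (by positivity : (2 * b : ℝ) ≠ 0)]
  linear_combination h

private lemma aux_gm3 {b : ℝ} (hb : 0 < b) :
    ∫ x : ℝ, x ^ 3 * Real.exp (-b * x ^ 2) = 0 := by
  have h := aux_gmrec hb 1
  simp only [Nat.cast_one, pow_one] at h
  rw [aux_gm1 hb] at h
  have h2b : (2 * b : ℝ) ≠ 0 := by positivity
  have : (2 * b : ℝ) * ∫ x : ℝ, x ^ 3 * Real.exp (-b * x ^ 2) = 0 := by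
    rw [h]; ring
  exact (mul_eq_zero.mp this).resolve_left h2b

private lemma aux_gm4 {b : ℝ} (hb : 0 < b) :
    ∫ x : ℝ, x ^ 4 * Real.exp (-b * x ^ 2)
      = 3 * Real.sqrt (Real.pi / b) / (4 * b ^ 2) := by
  have h := aux_gmrec hb 2
  rw [aux_gm2 hb] at h
  push_cast at h
  have h3 : (2 * b) * (Real.sqrt (Real.pi / b) / (2 * b)) = Real.sqrt (Real.pi / b) :=
    mul_div_cancel₀ _ (by positivity)
  rw [eq_div_iff (by positivity : (4 * b ^ 2 : ℝ) ≠ 0)]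
  linear_combination (2 * b) * h + 3 * h3

/-- The shear `(x, y) ↦ (x - d - e y, y)` as a measurable equivalence. -/
private noncomputable def shearEquiv (d e : ℝ) : (ℝ × ℝ) ≃ᵐ (ℝ × ℝ) where
  toEquiv :=
  { toFun := fun z => (z.1 - d - e * z.2, z.2)
    invFun := fun w => (w.1 + d + e * w.2, w.2)
    left_inv := fun z => by
      cases z with
      | mk x y => simp only [Prod.mk.injEq, and_true]; ring
    right_inv := fun w => by
      cases w with
      | mk x y => simp only [Prod.mk.injEq, and_true]; ring }
  measurable_toFun :=
    ((measurable_fst.sub measurable_const).sub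
      (measurable_const.mul measurable_snd)).prodMk measurable_snd
  measurable_invFun :=
    ((measurable_fst.add measurable_const).add
      (measurable_const.mul measurable_snd)).prodMk measurable_snd

private lemma shear_emb (d e : ℝ) :
    MeasurableEmbedding (fun z : ℝ × ℝ => (z.1 - d - e * z.2, z.2)) :=
  (shearEquiv d e).measurableEmbedding

private lemma shear_mp (d e : ℝ) :
    MeasurePreserving (fun z : ℝ × ℝ => (z.1 - d - e * z.2, z.2))
      (volume : Measure (ℝ × ℝ)) volume := by
  have h0 : MeasurePreserving (fun p : ℝ × ℝ => (p.1, p.2 - d - e * p.1))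
      ((volume : Measure ℝ).prod volume) ((volume : Measure ℝ).prod volume) := by
    apply (MeasurePreserving.id (volume : Measure ℝ)).skew_product
      (g := fun a c => c - d - e * a)
    · fun_prop
    · refine Filter.Eventually.of_forall fun x => ?_
      have : (fun c : ℝ => c - d - e * x) = fun c : ℝ => c - (d + e * x) := by
        funext c; ring
      rw [this]
      exact (measurePreserving_sub_right volume (d + e * x)).map_eq
  have hswap : MeasurePreserving (Prod.swap : ℝ × ℝ → ℝ × ℝ)
      ((volume : Measure ℝ).prod volume) ((volume : Measure ℝ).prod volume) :=
    Measure.measurePreserving_swap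
  have hfinal := (hswap.comp h0).comp hswap
  have hfun : (Prod.swap ∘ (fun p : ℝ × ℝ => (p.1, p.2 - d - e * p.1)) ∘ Prod.swap)
      = (fun z : ℝ × ℝ => (z.1 - d - e * z.2, z.2)) := by
    funext z
    simp [Function.comp, Prod.swap]
  rw [← hfun]
  exact hfinal

set_option maxHeartbeats 2000000 in
theorem fisher_metric_2D_correlated_model
    (S r : ℝ) (hS : 0 < S) (hr₁ : -1 < r) (hr₂ : r < 1)
    (p : ℝ → ℝ → ℝ × ℝ → ℝ)
    (hp : ∀ (μx σ : ℝ) (z : ℝ × ℝ), p μx σ z =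
      (1 / (2 * Real.pi * S ^ 2 * Real.sqrt (1 - r ^ 2))) *
        Real.exp (-(1 / (2 * (1 - r ^ 2))) *
          ((z.1 - μx) ^ 2 / σ ^ 2 + z.2 ^ 2 * σ ^ 2 / S ^ 4 +
            2 * r * (z.1 - μx) * z.2 / S ^ 2)))
    (μx σ : ℝ) (hσ : 0 < σ) :
    (∀ z : ℝ × ℝ, 0 < p μx σ z) ∧
    (∫ z : ℝ × ℝ, p μx σ z = 1) ∧
    (∫ z : ℝ × ℝ, p μx σ z * (deriv (fun t => Real.log (p t σ z)) μx) ^ 2 =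
      1 / ((1 - r ^ 2) * σ ^ 2)) ∧
    (∫ z : ℝ × ℝ, p μx σ z * (deriv (fun t => Real.log (p μx t z)) σ) ^ 2 =
      4 / ((1 - r ^ 2) * σ ^ 2)) ∧
    (∫ z : ℝ × ℝ, p μx σ z *
        (deriv (fun t => Real.log (p t σ z)) μx *
          deriv (fun t => Real.log (p μx t z)) σ) = 0) := by
  have hπ := Real.pi_pos
  set A : ℝ := 1 - r ^ 2 with hA_def
  have hA : 0 < A := by nlinarith
  have hsA : 0 < Real.sqrt A := Real.sqrt_pos.mpr hA
  set K : ℝ := 1 / (2 * Real.pi * S ^ 2 * Real.sqrt A) with hK_def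
  have hK : 0 < K := by positivity
  set a : ℝ := 1 / (2 * A * σ ^ 2) with ha_def
  have ha : 0 < a := by positivity
  set q : ℝ := σ ^ 2 / (2 * S ^ 4) with hq_def
  have hq : 0 < q := by positivity
  set γ : ℝ := -(r * σ ^ 2 / S ^ 2) with hγ_def
  -- factorization of the density
  have hfact : ∀ z : ℝ × ℝ, p μx σ z
      = K * (Real.exp (-a * (z.1 - μx - γ * z.2) ^ 2) * Real.exp (-q * z.2 ^ 2)) := by
    intro z
    rw [hp, ← Real.exp_add]
    congr 1
    rw [ha_def, hq_def, hγ_def, hA_def]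
    have h1 : (1 - r ^ 2) ≠ 0 := by nlinarith
    field_simp
    ring
  -- the score with respect to μx
  have hsc1 : ∀ z : ℝ × ℝ, deriv (fun t => Real.log (p t σ z)) μx
      = 2 * a * (z.1 - μx - γ * z.2) := by
    intro z
    have hfun : (fun t => Real.log (p t σ z))
        = fun t => Real.log K + (-(1 / (2 * A)) *
            ((z.1 - t) ^ 2 / σ ^ 2 + z.2 ^ 2 * σ ^ 2 / S ^ 4
              + 2 * r * (z.1 - t) * z.2 / S ^ 2)) := by
      funext t
      rw [hp, Real.log_mul hK.ne' (Real.exp_ne_zero _), Real.log_exp]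
    rw [hfun]
    have h1 : HasDerivAt (fun t : ℝ => z.1 - t) (-1) μx := by
      simpa using (hasDerivAt_id μx).const_sub z.1
    have h2 : HasDerivAt (fun t : ℝ => (z.1 - t) ^ 2)
        ((2 : ℕ) * (z.1 - μx) ^ 1 * (-1)) μx := h1.pow 2
    have H : HasDerivAt (fun t : ℝ =>
        ((z.1 - t) ^ 2 / σ ^ 2 + z.2 ^ 2 * σ ^ 2 / S ^ 4
          + 2 * r * (z.1 - t) * z.2 / S ^ 2))
        (((2 : ℕ) * (z.1 - μx) ^ 1 * (-1)) / σ ^ 2 + 0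
          + (2 * r * (-1)) * z.2 / S ^ 2) μx := by
      exact ((h2.div_const (σ ^ 2)).add
        (hasDerivAt_const μx (z.2 ^ 2 * σ ^ 2 / S ^ 4))).add
        (((h1.const_mul (2 * r)).mul_const z.2).div_const (S ^ 2))
    have Hfull := (hasDerivAt_const μx (Real.log K)).add (H.const_mul (-(1 / (2 * A))))
    refine Hfull.deriv.trans ?_
    rw [ha_def, hγ_def]
    have hA' : A ≠ 0 := hA.ne'
    have hσ' : σ ≠ 0 := hσ.ne'
    have hS' : S ≠ 0 := hS.ne'
    field_simp
    ring
  -- the score with respect to σ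
  have hsc2 : ∀ z : ℝ × ℝ, deriv (fun t => Real.log (p μx t z)) σ
      = (1 / A) * ((z.1 - μx) ^ 2 / σ ^ 3 - z.2 ^ 2 * σ / S ^ 4) := by
    intro z
    have hfun : (fun t => Real.log (p μx t z))
        = fun t => Real.log K + (-(1 / (2 * A)) *
            ((z.1 - μx) ^ 2 * (t ^ 2)⁻¹ + z.2 ^ 2 * t ^ 2 / S ^ 4
              + 2 * r * (z.1 - μx) * z.2 / S ^ 2)) := by
      funext t
      rw [hp, Real.log_mul hK.ne' (Real.exp_ne_zero _), Real.log_exp]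
      ring
    rw [hfun]
    have hq2 : HasDerivAt (fun t : ℝ => t ^ 2) ((2 : ℕ) * σ ^ 1) σ := hasDerivAt_pow 2 σ
    have hσ2 : (σ ^ 2 : ℝ) ≠ 0 := by positivity
    have H2 : HasDerivAt (fun t : ℝ => (z.1 - μx) ^ 2 * (t ^ 2)⁻¹)
        ((z.1 - μx) ^ 2 * (-((2 : ℕ) * σ ^ 1) / (σ ^ 2) ^ 2)) σ :=
      (hq2.inv hσ2).const_mul ((z.1 - μx) ^ 2)
    have H3 : HasDerivAt (fun t : ℝ => z.2 ^ 2 * t ^ 2 / S ^ 4)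
        ((z.2 ^ 2 * ((2 : ℕ) * σ ^ 1)) / S ^ 4) σ :=
      (hq2.const_mul (z.2 ^ 2)).div_const (S ^ 4)
    have H := ((H2.add H3).add
      (hasDerivAt_const σ (2 * r * (z.1 - μx) * z.2 / S ^ 2))).const_mul (-(1 / (2 * A)))
    have Hfull := (hasDerivAt_const σ (Real.log K)).add H
    refine Hfull.deriv.trans ?_
    have hA' : A ≠ 0 := hA.ne'
    have hσ' : σ ≠ 0 := hσ.ne'
    have hS' : S ≠ 0 := hS.ne'
    field_simp
    ring
  -- measure-theoretic change of variables
  have hT := shear_mp μx γ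
  have hTe := shear_emb μx γ
  -- normalization constant computation
  have hQ : (0 : ℝ) < 2 * Real.pi * S ^ 2 * Real.sqrt A := by positivity
  have hM : Real.sqrt (Real.pi / a) * Real.sqrt (Real.pi / q)
      = 2 * Real.pi * S ^ 2 * Real.sqrt A := by
    have hpa : (0 : ℝ) ≤ Real.pi / a := le_of_lt (div_pos hπ ha)
    rw [← Real.sqrt_mul hpa]
    have : Real.pi / a * (Real.pi / q) = (2 * Real.pi * S ^ 2) ^ 2 * A := by
      rw [ha_def, hq_def]
      have hσ' : σ ≠ 0 := hσ.ne'
      have hS' : S ≠ 0 := hS.ne'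
      have hA' : A ≠ 0 := hA.ne'
      field_simp
    rw [this, Real.sqrt_mul (by positivity) A,
      Real.sqrt_sq (by positivity : (0:ℝ) ≤ 2 * Real.pi * S ^ 2)]
  have hKP : K * (Real.sqrt (Real.pi / a) * Real.sqrt (Real.pi / q)) = 1 := by
    rw [hM, hK_def]
    exact one_div_mul_cancel hQ.ne'
  refine ⟨?_, ?_, ?_, ?_, ?_⟩
  -- positivity
  · intro z
    rw [hfact z]
    exact mul_pos hK (mul_pos (Real.exp_pos _) (Real.exp_pos _))
  -- normalization
  · calc ∫ z : ℝ × ℝ, p μx σ z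
        = ∫ z : ℝ × ℝ, K * (Real.exp (-a * (z.1 - μx - γ * z.2) ^ 2)
            * Real.exp (-q * z.2 ^ 2)) := by
          congr 1; funext z; exact hfact z
      _ = ∫ w : ℝ × ℝ, K * (Real.exp (-a * w.1 ^ 2) * Real.exp (-q * w.2 ^ 2)) :=
          hT.integral_comp hTe
            (fun w : ℝ × ℝ => K * (Real.exp (-a * w.1 ^ 2) * Real.exp (-q * w.2 ^ 2)))
      _ = K * ((∫ x : ℝ, Real.exp (-a * x ^ 2)) * ∫ y : ℝ, Real.exp (-q * y ^ 2)) := by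
          have hin : ∫ w : ℝ × ℝ, Real.exp (-a * w.1 ^ 2) * Real.exp (-q * w.2 ^ 2)
              = (∫ x : ℝ, Real.exp (-a * x ^ 2)) * ∫ y : ℝ, Real.exp (-q * y ^ 2) :=
            integral_prod_mul (fun x : ℝ => Real.exp (-a * x ^ 2)) (fun y : ℝ => Real.exp (-q * y ^ 2))
          rw [integral_const_mul, hin]
      _ = 1 := by rw [aux_gm0, aux_gm0]; exact hKP
  -- g_{μμ}
  · calc ∫ z : ℝ × ℝ, p μx σ z * (deriv (fun t => Real.log (p t σ z)) μx) ^ 2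
        = ∫ z : ℝ × ℝ, (4 * a ^ 2 * K) * (((z.1 - μx - γ * z.2) ^ 2
            * Real.exp (-a * (z.1 - μx - γ * z.2) ^ 2)) * Real.exp (-q * z.2 ^ 2)) := by
          congr 1; funext z
          rw [hfact z, hsc1 z]
          ring
      _ = ∫ w : ℝ × ℝ, (4 * a ^ 2 * K) * ((w.1 ^ 2 * Real.exp (-a * w.1 ^ 2))
            * Real.exp (-q * w.2 ^ 2)) :=
          hT.integral_comp hTe (fun w : ℝ × ℝ => (4 * a ^ 2 * K)
            * ((w.1 ^ 2 * Real.exp (-a * w.1 ^ 2)) * Real.exp (-q * w.2 ^ 2)))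
      _ = (4 * a ^ 2 * K) * ((∫ x : ℝ, x ^ 2 * Real.exp (-a * x ^ 2))
            * ∫ y : ℝ, Real.exp (-q * y ^ 2)) := by
          have hin : ∫ w : ℝ × ℝ, (w.1 ^ 2 * Real.exp (-a * w.1 ^ 2)) * Real.exp (-q * w.2 ^ 2)
              = (∫ x : ℝ, x ^ 2 * Real.exp (-a * x ^ 2)) * ∫ y : ℝ, Real.exp (-q * y ^ 2) :=
            integral_prod_mul (fun x : ℝ => x ^ 2 * Real.exp (-a * x ^ 2)) (fun y : ℝ => Real.exp (-q * y ^ 2))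
          rw [integral_const_mul, hin]
      _ = 1 / (A * σ ^ 2) := by
          rw [aux_gm2 ha, aux_gm0]
          have hstep : (4 * a ^ 2 * K) * ((Real.sqrt (Real.pi / a) / (2 * a))
              * Real.sqrt (Real.pi / q))
              = (2 * a) * (K * (Real.sqrt (Real.pi / a) * Real.sqrt (Real.pi / q))) := by
            field_simp
            ring
          rw [hstep, hKP, mul_one, ha_def]
          have hA' : A ≠ 0 := hA.ne'
          have hσ' : σ ≠ 0 := hσ.ne'
          field_simp
  -- g_{σσ}
  · have I40 : Integrable (fun w : ℝ × ℝ => (K / (A ^ 2 * σ ^ 6)) * ((w.1 ^ 4 * Real.exp (-a * w.1 ^ 2)) * (Real.exp (-q * w.2 ^ 2)))) volume :=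
      ((aux_ipg ha 4).mul_prod (integrable_exp_neg_mul_sq hq)).const_mul _
    have I31 : Integrable (fun w : ℝ × ℝ => (4 * γ * K / (A ^ 2 * σ ^ 6)) * ((w.1 ^ 3 * Real.exp (-a * w.1 ^ 2)) * (w.2 * Real.exp (-q * w.2 ^ 2)))) volume := by
      have := ((aux_ipg ha 3).mul_prod (aux_ipg hq 1)).const_mul (4 * γ * K / (A ^ 2 * σ ^ 6))
      simp only [pow_one] at this; exact this
    have I22 : Integrable (fun w : ℝ × ℝ => ((2 * (γ ^ 2 - σ ^ 4 / S ^ 4) + 4 * γ ^ 2) * K / (A ^ 2 * σ ^ 6)) * ((w.1 ^ 2 * Real.exp (-a * w.1 ^ 2)) * (w.2 ^ 2 * Real.exp (-q * w.2 ^ 2)))) volume :=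
      ((aux_ipg ha 2).mul_prod (aux_ipg hq 2)).const_mul _
    have I13 : Integrable (fun w : ℝ × ℝ => (4 * γ * (γ ^ 2 - σ ^ 4 / S ^ 4) * K / (A ^ 2 * σ ^ 6)) * ((w.1 * Real.exp (-a * w.1 ^ 2)) * (w.2 ^ 3 * Real.exp (-q * w.2 ^ 2)))) volume := by
      have := ((aux_ipg ha 1).mul_prod (aux_ipg hq 3)).const_mul (4 * γ * (γ ^ 2 - σ ^ 4 / S ^ 4) * K / (A ^ 2 * σ ^ 6))
      simp only [pow_one] at this; exact this
    have I04 : Integrable (fun w : ℝ × ℝ => ((γ ^ 2 - σ ^ 4 / S ^ 4) ^ 2 * K / (A ^ 2 * σ ^ 6)) * ((Real.exp (-a * w.1 ^ 2)) * (w.2 ^ 4 * Real.exp (-q * w.2 ^ 2)))) volume :=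
      ((integrable_exp_neg_mul_sq ha).mul_prod (aux_ipg hq 4)).const_mul _
    have Ia : Integrable (fun w : ℝ × ℝ => (K / (A ^ 2 * σ ^ 6)) * ((w.1 ^ 4 * Real.exp (-a * w.1 ^ 2)) * (Real.exp (-q * w.2 ^ 2))) + (4 * γ * K / (A ^ 2 * σ ^ 6)) * ((w.1 ^ 3 * Real.exp (-a * w.1 ^ 2)) * (w.2 * Real.exp (-q * w.2 ^ 2)))) volume := I40.add I31
    have Ib : Integrable (fun w : ℝ × ℝ => (K / (A ^ 2 * σ ^ 6)) * ((w.1 ^ 4 * Real.exp (-a * w.1 ^ 2)) * (Real.exp (-q * w.2 ^ 2))) + (4 * γ * K / (A ^ 2 * σ ^ 6)) * ((w.1 ^ 3 * Real.exp (-a * w.1 ^ 2)) * (w.2 * Real.exp (-q * w.2 ^ 2))) + ((2 * (γ ^ 2 - σ ^ 4 / S ^ 4) + 4 * γ ^ 2) * K / (A ^ 2 * σ ^ 6)) * ((w.1 ^ 2 * Real.exp (-a * w.1 ^ 2)) * (w.2 ^ 2 * Real.exp (-q * w.2 ^ 2)))) volume := Ia.add I22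
    have Ic : Integrable (fun w : ℝ × ℝ => (K / (A ^ 2 * σ ^ 6)) * ((w.1 ^ 4 * Real.exp (-a * w.1 ^ 2)) * (Real.exp (-q * w.2 ^ 2))) + (4 * γ * K / (A ^ 2 * σ ^ 6)) * ((w.1 ^ 3 * Real.exp (-a * w.1 ^ 2)) * (w.2 * Real.exp (-q * w.2 ^ 2))) + ((2 * (γ ^ 2 - σ ^ 4 / S ^ 4) + 4 * γ ^ 2) * K / (A ^ 2 * σ ^ 6)) * ((w.1 ^ 2 * Real.exp (-a * w.1 ^ 2)) * (w.2 ^ 2 * Real.exp (-q * w.2 ^ 2))) + (4 * γ * (γ ^ 2 - σ ^ 4 / S ^ 4) * K / (A ^ 2 * σ ^ 6)) * ((w.1 * Real.exp (-a * w.1 ^ 2)) * (w.2 ^ 3 * Real.exp (-q * w.2 ^ 2)))) volume := Ib.add I13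
    calc ∫ z : ℝ × ℝ, p μx σ z * (deriv (fun t => Real.log (p μx t z)) σ) ^ 2
        = ∫ z : ℝ × ℝ,
            ((K / (A ^ 2 * σ ^ 6)) * (((z.1 - μx - γ * z.2) ^ 4 * Real.exp (-a * (z.1 - μx - γ * z.2) ^ 2)) * (Real.exp (-q * z.2 ^ 2)))
            + (4 * γ * K / (A ^ 2 * σ ^ 6)) * (((z.1 - μx - γ * z.2) ^ 3 * Real.exp (-a * (z.1 - μx - γ * z.2) ^ 2)) * (z.2 * Real.exp (-q * z.2 ^ 2)))
            + ((2 * (γ ^ 2 - σ ^ 4 / S ^ 4) + 4 * γ ^ 2) * K / (A ^ 2 * σ ^ 6)) * (((z.1 - μx - γ * z.2) ^ 2 * Real.exp (-a * (z.1 - μx - γ * z.2) ^ 2)) * (z.2 ^ 2 * Real.exp (-q * z.2 ^ 2)))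
            + (4 * γ * (γ ^ 2 - σ ^ 4 / S ^ 4) * K / (A ^ 2 * σ ^ 6)) * (((z.1 - μx - γ * z.2) * Real.exp (-a * (z.1 - μx - γ * z.2) ^ 2)) * (z.2 ^ 3 * Real.exp (-q * z.2 ^ 2)))
            + ((γ ^ 2 - σ ^ 4 / S ^ 4) ^ 2 * K / (A ^ 2 * σ ^ 6)) * ((Real.exp (-a * (z.1 - μx - γ * z.2) ^ 2)) * (z.2 ^ 4 * Real.exp (-q * z.2 ^ 2)))) := by
          congr 1; funext z
          rw [hfact z, hsc2 z]
          have hA' : A ≠ 0 := hA.ne'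
          have hσ' : σ ≠ 0 := hσ.ne'
          have hS' : S ≠ 0 := hS.ne'
          field_simp
          ring
      _ = ∫ w : ℝ × ℝ,
            ((K / (A ^ 2 * σ ^ 6)) * ((w.1 ^ 4 * Real.exp (-a * w.1 ^ 2)) * (Real.exp (-q * w.2 ^ 2)))
            + (4 * γ * K / (A ^ 2 * σ ^ 6)) * ((w.1 ^ 3 * Real.exp (-a * w.1 ^ 2)) * (w.2 * Real.exp (-q * w.2 ^ 2)))
            + ((2 * (γ ^ 2 - σ ^ 4 / S ^ 4) + 4 * γ ^ 2) * K / (A ^ 2 * σ ^ 6)) * ((w.1 ^ 2 * Real.exp (-a * w.1 ^ 2)) * (w.2 ^ 2 * Real.exp (-q * w.2 ^ 2)))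
            + (4 * γ * (γ ^ 2 - σ ^ 4 / S ^ 4) * K / (A ^ 2 * σ ^ 6)) * ((w.1 * Real.exp (-a * w.1 ^ 2)) * (w.2 ^ 3 * Real.exp (-q * w.2 ^ 2)))
            + ((γ ^ 2 - σ ^ 4 / S ^ 4) ^ 2 * K / (A ^ 2 * σ ^ 6)) * ((Real.exp (-a * w.1 ^ 2)) * (w.2 ^ 4 * Real.exp (-q * w.2 ^ 2)))) :=
          hT.integral_comp hTe
            (fun w : ℝ × ℝ =>
            (K / (A ^ 2 * σ ^ 6)) * ((w.1 ^ 4 * Real.exp (-a * w.1 ^ 2)) * (Real.exp (-q * w.2 ^ 2)))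
            + (4 * γ * K / (A ^ 2 * σ ^ 6)) * ((w.1 ^ 3 * Real.exp (-a * w.1 ^ 2)) * (w.2 * Real.exp (-q * w.2 ^ 2)))
            + ((2 * (γ ^ 2 - σ ^ 4 / S ^ 4) + 4 * γ ^ 2) * K / (A ^ 2 * σ ^ 6)) * ((w.1 ^ 2 * Real.exp (-a * w.1 ^ 2)) * (w.2 ^ 2 * Real.exp (-q * w.2 ^ 2)))
            + (4 * γ * (γ ^ 2 - σ ^ 4 / S ^ 4) * K / (A ^ 2 * σ ^ 6)) * ((w.1 * Real.exp (-a * w.1 ^ 2)) * (w.2 ^ 3 * Real.exp (-q * w.2 ^ 2)))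
            + ((γ ^ 2 - σ ^ 4 / S ^ 4) ^ 2 * K / (A ^ 2 * σ ^ 6)) * ((Real.exp (-a * w.1 ^ 2)) * (w.2 ^ 4 * Real.exp (-q * w.2 ^ 2))))
      _ = 4 / (A * σ ^ 2) := by
          rw [integral_add Ic I04, integral_add Ib I13, integral_add Ia I22,
            integral_add I40 I31]
          rw [integral_const_mul, integral_const_mul, integral_const_mul,
            integral_const_mul, integral_const_mul]
          have P40 : ∫ w : ℝ × ℝ, (w.1 ^ 4 * Real.exp (-a * w.1 ^ 2)) * (Real.exp (-q * w.2 ^ 2))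
              = (∫ x : ℝ, x ^ 4 * Real.exp (-a * x ^ 2)) * ∫ y : ℝ, Real.exp (-q * y ^ 2) :=
            integral_prod_mul (fun x : ℝ => x ^ 4 * Real.exp (-a * x ^ 2)) (fun y : ℝ => Real.exp (-q * y ^ 2))
          have P31 : ∫ w : ℝ × ℝ, (w.1 ^ 3 * Real.exp (-a * w.1 ^ 2)) * (w.2 * Real.exp (-q * w.2 ^ 2))
              = (∫ x : ℝ, x ^ 3 * Real.exp (-a * x ^ 2)) * ∫ y : ℝ, y * Real.exp (-q * y ^ 2) :=
            integral_prod_mul (fun x : ℝ => x ^ 3 * Real.exp (-a * x ^ 2)) (fun y : ℝ => y * Real.exp (-q * y ^ 2))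
          have P22 : ∫ w : ℝ × ℝ, (w.1 ^ 2 * Real.exp (-a * w.1 ^ 2)) * (w.2 ^ 2 * Real.exp (-q * w.2 ^ 2))
              = (∫ x : ℝ, x ^ 2 * Real.exp (-a * x ^ 2)) * ∫ y : ℝ, y ^ 2 * Real.exp (-q * y ^ 2) :=
            integral_prod_mul (fun x : ℝ => x ^ 2 * Real.exp (-a * x ^ 2)) (fun y : ℝ => y ^ 2 * Real.exp (-q * y ^ 2))
          have P13 : ∫ w : ℝ × ℝ, (w.1 * Real.exp (-a * w.1 ^ 2)) * (w.2 ^ 3 * Real.exp (-q * w.2 ^ 2))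
              = (∫ x : ℝ, x * Real.exp (-a * x ^ 2)) * ∫ y : ℝ, y ^ 3 * Real.exp (-q * y ^ 2) :=
            integral_prod_mul (fun x : ℝ => x * Real.exp (-a * x ^ 2)) (fun y : ℝ => y ^ 3 * Real.exp (-q * y ^ 2))
          have P04 : ∫ w : ℝ × ℝ, (Real.exp (-a * w.1 ^ 2)) * (w.2 ^ 4 * Real.exp (-q * w.2 ^ 2))
              = (∫ x : ℝ, Real.exp (-a * x ^ 2)) * ∫ y : ℝ, y ^ 4 * Real.exp (-q * y ^ 2) :=
            integral_prod_mul (fun x : ℝ => Real.exp (-a * x ^ 2)) (fun y : ℝ => y ^ 4 * Real.exp (-q * y ^ 2))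
          rw [P40, P31, P22, P13, P04]
          rw [aux_gm4 ha, aux_gm0, aux_gm3 ha, aux_gm1 hq, aux_gm2 ha, aux_gm2 hq,
            aux_gm1 ha, aux_gm3 hq, aux_gm0, aux_gm4 hq]
          have hstep : (K / (A ^ 2 * σ ^ 6)) * ((3 * Real.sqrt (Real.pi / a) / (4 * a ^ 2))
                * Real.sqrt (Real.pi / q))
              + (4 * γ * K / (A ^ 2 * σ ^ 6)) * (0 * 0)
              + ((2 * (γ ^ 2 - σ ^ 4 / S ^ 4) + 4 * γ ^ 2) * K / (A ^ 2 * σ ^ 6))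
                * ((Real.sqrt (Real.pi / a) / (2 * a)) * (Real.sqrt (Real.pi / q) / (2 * q)))
              + (4 * γ * (γ ^ 2 - σ ^ 4 / S ^ 4) * K / (A ^ 2 * σ ^ 6)) * (0 * 0)
              + ((γ ^ 2 - σ ^ 4 / S ^ 4) ^ 2 * K / (A ^ 2 * σ ^ 6))
                * (Real.sqrt (Real.pi / a) * (3 * Real.sqrt (Real.pi / q) / (4 * q ^ 2)))
              = ((1 / (A ^ 2 * σ ^ 6)) * (3 / (4 * a ^ 2)
                  + (2 * (γ ^ 2 - σ ^ 4 / S ^ 4) + 4 * γ ^ 2) / (4 * a * q)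
                  + 3 * (γ ^ 2 - σ ^ 4 / S ^ 4) ^ 2 / (4 * q ^ 2)))
                * (K * (Real.sqrt (Real.pi / a) * Real.sqrt (Real.pi / q))) := by
            ring
          rw [hstep, hKP, mul_one, ha_def, hq_def, hγ_def, hA_def]
          have h1 : (1 - r ^ 2 : ℝ) ≠ 0 := by nlinarith
          have hσ' : σ ≠ 0 := hσ.ne'
          have hS' : S ≠ 0 := hS.ne'
          field_simp
          ring
  -- g_{μσ} = 0
  · have J30 : Integrable (fun w : ℝ × ℝ => (2 * a * K / (A * σ ^ 3)) * ((w.1 ^ 3 * Real.exp (-a * w.1 ^ 2)) * (Real.exp (-q * w.2 ^ 2)))) volume :=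
      ((aux_ipg ha 3).mul_prod (integrable_exp_neg_mul_sq hq)).const_mul _
    have J21 : Integrable (fun w : ℝ × ℝ => (4 * a * K * γ / (A * σ ^ 3)) * ((w.1 ^ 2 * Real.exp (-a * w.1 ^ 2)) * (w.2 * Real.exp (-q * w.2 ^ 2)))) volume := by
      have := ((aux_ipg ha 2).mul_prod (aux_ipg hq 1)).const_mul (4 * a * K * γ / (A * σ ^ 3))
      simp only [pow_one] at this; exact this
    have J12 : Integrable (fun w : ℝ × ℝ => (2 * a * K * (γ ^ 2 - σ ^ 4 / S ^ 4) / (A * σ ^ 3)) * ((w.1 * Real.exp (-a * w.1 ^ 2)) * (w.2 ^ 2 * Real.exp (-q * w.2 ^ 2)))) volume := by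
      have := ((aux_ipg ha 1).mul_prod (aux_ipg hq 2)).const_mul (2 * a * K * (γ ^ 2 - σ ^ 4 / S ^ 4) / (A * σ ^ 3))
      simp only [pow_one] at this; exact this
    have Ja : Integrable (fun w : ℝ × ℝ => (2 * a * K / (A * σ ^ 3)) * ((w.1 ^ 3 * Real.exp (-a * w.1 ^ 2)) * (Real.exp (-q * w.2 ^ 2))) + (4 * a * K * γ / (A * σ ^ 3)) * ((w.1 ^ 2 * Real.exp (-a * w.1 ^ 2)) * (w.2 * Real.exp (-q * w.2 ^ 2)))) volume := J30.add J21
    calc ∫ z : ℝ × ℝ, p μx σ z * (deriv (fun t => Real.log (p t σ z)) μx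
            * deriv (fun t => Real.log (p μx t z)) σ)
        = ∫ z : ℝ × ℝ,
            ((2 * a * K / (A * σ ^ 3)) * (((z.1 - μx - γ * z.2) ^ 3 * Real.exp (-a * (z.1 - μx - γ * z.2) ^ 2)) * (Real.exp (-q * z.2 ^ 2)))
            + (4 * a * K * γ / (A * σ ^ 3)) * (((z.1 - μx - γ * z.2) ^ 2 * Real.exp (-a * (z.1 - μx - γ * z.2) ^ 2)) * (z.2 * Real.exp (-q * z.2 ^ 2)))
            + (2 * a * K * (γ ^ 2 - σ ^ 4 / S ^ 4) / (A * σ ^ 3)) * (((z.1 - μx - γ * z.2) * Real.exp (-a * (z.1 - μx - γ * z.2) ^ 2)) * (z.2 ^ 2 * Real.exp (-q * z.2 ^ 2)))) := by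
          congr 1; funext z
          rw [hfact z, hsc1 z, hsc2 z]
          have hA' : A ≠ 0 := hA.ne'
          have hσ' : σ ≠ 0 := hσ.ne'
          have hS' : S ≠ 0 := hS.ne'
          field_simp
          ring
      _ = ∫ w : ℝ × ℝ,
            ((2 * a * K / (A * σ ^ 3)) * ((w.1 ^ 3 * Real.exp (-a * w.1 ^ 2)) * (Real.exp (-q * w.2 ^ 2)))
            + (4 * a * K * γ / (A * σ ^ 3)) * ((w.1 ^ 2 * Real.exp (-a * w.1 ^ 2)) * (w.2 * Real.exp (-q * w.2 ^ 2)))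
            + (2 * a * K * (γ ^ 2 - σ ^ 4 / S ^ 4) / (A * σ ^ 3)) * ((w.1 * Real.exp (-a * w.1 ^ 2)) * (w.2 ^ 2 * Real.exp (-q * w.2 ^ 2)))) :=
          hT.integral_comp hTe
            (fun w : ℝ × ℝ =>
            (2 * a * K / (A * σ ^ 3)) * ((w.1 ^ 3 * Real.exp (-a * w.1 ^ 2)) * (Real.exp (-q * w.2 ^ 2)))
            + (4 * a * K * γ / (A * σ ^ 3)) * ((w.1 ^ 2 * Real.exp (-a * w.1 ^ 2)) * (w.2 * Real.exp (-q * w.2 ^ 2)))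
            + (2 * a * K * (γ ^ 2 - σ ^ 4 / S ^ 4) / (A * σ ^ 3)) * ((w.1 * Real.exp (-a * w.1 ^ 2)) * (w.2 ^ 2 * Real.exp (-q * w.2 ^ 2))))
      _ = 0 := by
          rw [integral_add Ja J12, integral_add J30 J21]
          rw [integral_const_mul, integral_const_mul, integral_const_mul]
          have Q30 : ∫ w : ℝ × ℝ, (w.1 ^ 3 * Real.exp (-a * w.1 ^ 2)) * (Real.exp (-q * w.2 ^ 2))
              = (∫ x : ℝ, x ^ 3 * Real.exp (-a * x ^ 2)) * ∫ y : ℝ, Real.exp (-q * y ^ 2) :=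
            integral_prod_mul (fun x : ℝ => x ^ 3 * Real.exp (-a * x ^ 2)) (fun y : ℝ => Real.exp (-q * y ^ 2))
          have Q21 : ∫ w : ℝ × ℝ, (w.1 ^ 2 * Real.exp (-a * w.1 ^ 2)) * (w.2 * Real.exp (-q * w.2 ^ 2))
              = (∫ x : ℝ, x ^ 2 * Real.exp (-a * x ^ 2)) * ∫ y : ℝ, y * Real.exp (-q * y ^ 2) :=
            integral_prod_mul (fun x : ℝ => x ^ 2 * Real.exp (-a * x ^ 2)) (fun y : ℝ => y * Real.exp (-q * y ^ 2))
          have Q12 : ∫ w : ℝ × ℝ, (w.1 * Real.exp (-a * w.1 ^ 2)) * (w.2 ^ 2 * Real.exp (-q * w.2 ^ 2))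
              = (∫ x : ℝ, x * Real.exp (-a * x ^ 2)) * ∫ y : ℝ, y ^ 2 * Real.exp (-q * y ^ 2) :=
            integral_prod_mul (fun x : ℝ => x * Real.exp (-a * x ^ 2)) (fun y : ℝ => y ^ 2 * Real.exp (-q * y ^ 2))
          rw [Q30, Q21, Q12]
          rw [aux_gm3 ha, aux_gm1 hq, aux_gm1 ha]
          ring
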